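/- Let m be a nonzero integer, ε ≥ 0, R > 0, and β ∈ ℝ with c := 1/R + ε·β ≠ 0. Let w, ψ : (0,1) → ℂ be smooth functions satisfying on (0,1) the system (1/R + β·ε)·Δ_m w + i·m·R·ψ = β·w and −(1/R + β·ε)·Δ_m(Δ_m ψ) + i·ε·m·R·Δ_m w = −β·Δ_m ψ. Define λ = (√ε·m·R − β)/c and μ = (−√ε·m·R − β)/c. Then w satisfies the sixth order equation (Δ_m + λ)(Δ_m + μ)(Δ_m w) = 0 on (0,1). -/

import Mathlib

open Complex

noncomputable section

def besselOp (m : ℤ) (u : ℝ → ℂ) : ℝ → ℂ :=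
  fun r => deriv (deriv u) r + deriv u r / (r : ℂ) - (m : ℂ) ^ 2 * u r / (r : ℂ) ^ 2

private lemma cd_deriv {u : ℝ → ℂ} (hu : ContDiffOn ℝ (⊤ : ℕ∞) u (Set.Ioo 0 1)) :
    ContDiffOn ℝ (⊤ : ℕ∞) (deriv u) (Set.Ioo 0 1) :=
  ((contDiffOn_infty_iff_deriv_of_isOpen isOpen_Ioo).1 hu).2

private lemma besselOp_cd {m : ℤ} {u : ℝ → ℂ}
    (hu : ContDiffOn ℝ (⊤ : ℕ∞) u (Set.Ioo 0 1)) :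
    ContDiffOn ℝ (⊤ : ℕ∞) (besselOp m u) (Set.Ioo 0 1) := by
  have h1 := cd_deriv hu
  have h2 := cd_deriv h1
  have hinvR : ContDiffOn ℝ (⊤ : ℕ∞) (fun r : ℝ => r⁻¹) (Set.Ioo 0 1) :=
    contDiffOn_id.inv (fun x hx => ne_of_gt hx.1)
  have hinv : ContDiffOn ℝ (⊤ : ℕ∞) (fun r : ℝ => ((r⁻¹ : ℝ) : ℂ)) (Set.Ioo 0 1) :=
    (Complex.ofRealCLM.contDiff).comp_contDiffOn hinvR
  have hfun : besselOp m u = fun r : ℝ =>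
      deriv (deriv u) r + deriv u r * ((r⁻¹ : ℝ) : ℂ)
        - (m : ℂ) ^ 2 * u r * ((r⁻¹ : ℝ) : ℂ) ^ 2 := by
    funext r; unfold besselOp; push_cast; ring
  rw [hfun]
  exact (h2.add (h1.mul hinv)).sub ((contDiffOn_const.mul hu).mul (hinv.pow 2))

private lemma diffAt {u : ℝ → ℂ} (hu : ContDiffOn ℝ (⊤ : ℕ∞) u (Set.Ioo 0 1))
    {r : ℝ} (hr : r ∈ Set.Ioo (0:ℝ) 1) : DifferentiableAt ℝ u r :=
  (hu.contDiffAt (isOpen_Ioo.mem_nhds hr)).differentiableAt (by simp)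

private lemma deriv_comb {f g : ℝ → ℂ} (a b : ℂ) {r : ℝ}
    (hf : DifferentiableAt ℝ f r) (hg : DifferentiableAt ℝ g r) :
    deriv (fun s => a * f s + b * g s) r = a * deriv f r + b * deriv g r := by
  rw [deriv_fun_add (hf.const_mul a) (hg.const_mul b), deriv_const_mul a hf, deriv_const_mul b hg]

private lemma besselOp_congr {m : ℤ} {f g : ℝ → ℂ} {r : ℝ} (h : f =ᶠ[nhds r] g) :
    besselOp m f r = besselOp m g r := by
  unfold besselOp
  rw [h.self_of_nhds, h.deriv.self_of_nhds, h.deriv.deriv.self_of_nhds]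

private lemma besselOp_linear {m : ℤ} {f g : ℝ → ℂ} (a b : ℂ)
    (hf : ContDiffOn ℝ (⊤ : ℕ∞) f (Set.Ioo 0 1))
    (hg : ContDiffOn ℝ (⊤ : ℕ∞) g (Set.Ioo 0 1)) :
    ∀ r ∈ Set.Ioo (0:ℝ) 1,
      besselOp m (fun s => a * f s + b * g s) r = a * besselOp m f r + b * besselOp m g r := by
  intro r hr
  have h1 : ∀ s ∈ Set.Ioo (0:ℝ) 1,
      deriv (fun t => a * f t + b * g t) s = a * deriv f s + b * deriv g s :=
    fun s hs => deriv_comb a b (diffAt hf hs) (diffAt hg hs)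
  have hev : deriv (fun t => a * f t + b * g t) =ᶠ[nhds r]
      (fun s => a * deriv f s + b * deriv g s) :=
    Filter.eventually_of_mem (isOpen_Ioo.mem_nhds hr) h1
  have h2 : deriv (deriv (fun t => a * f t + b * g t)) r
      = a * deriv (deriv f) r + b * deriv (deriv g) r := by
    rw [hev.deriv_eq]
    exact deriv_comb a b (diffAt (cd_deriv hf) hr) (diffAt (cd_deriv hg) hr)
  unfold besselOp
  rw [h2, h1 r hr]
  ring

theorem sixth_order_factorization (m : ℤ) (hm : m ≠ 0) (ε R β : ℝ)
    (hε : 0 ≤ ε) (hR : 0 < R) (hc : 1 / R + ε * β ≠ 0)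
    (lam mu : ℝ)
    (hlam : lam = (Real.sqrt ε * m * R - β) / (1 / R + ε * β))
    (hmu : mu = (-(Real.sqrt ε * m * R) - β) / (1 / R + ε * β))
    (w ψ : ℝ → ℂ)
    (hw : ContDiffOn ℝ (⊤ : ℕ∞) w (Set.Ioo 0 1))
    (hψ : ContDiffOn ℝ (⊤ : ℕ∞) ψ (Set.Ioo 0 1))
    (heq1 : ∀ r ∈ Set.Ioo (0 : ℝ) 1,
      ((1 / R + β * ε : ℝ) : ℂ) * besselOp m w r + Complex.I * (m : ℂ) * (R : ℂ) * ψ r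
        = (β : ℂ) * w r)
    (heq2 : ∀ r ∈ Set.Ioo (0 : ℝ) 1,
      -((1 / R + β * ε : ℝ) : ℂ) * besselOp m (besselOp m ψ) r
        + Complex.I * (ε : ℂ) * (m : ℂ) * (R : ℂ) * besselOp m w r
        = -(β : ℂ) * besselOp m ψ r) :
    ∀ r ∈ Set.Ioo (0 : ℝ) 1,
      besselOp m (fun s => besselOp m (besselOp m w) s + (mu : ℂ) * besselOp m w s) r
        + (lam : ℂ) * (besselOp m (besselOp m w) r + (mu : ℂ) * besselOp m w r) = 0 := by
  intro r hr
  -- notation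
  set S := Set.Ioo (0:ℝ) 1 with hS
  have hw1 : ContDiffOn ℝ (⊤ : ℕ∞) (besselOp m w) S := besselOp_cd hw
  have hw2 : ContDiffOn ℝ (⊤ : ℕ∞) (besselOp m (besselOp m w)) S := besselOp_cd hw1
  have hψ1 : ContDiffOn ℝ (⊤ : ℕ∞) (besselOp m ψ) S := besselOp_cd hψ
  -- constants
  have hRC : (R : ℂ) ≠ 0 := Complex.ofReal_ne_zero.mpr hR.ne'
  have hmC : (m : ℂ) ≠ 0 := by exact_mod_cast hm
  have hd : Complex.I * (m : ℂ) * (R : ℂ) ≠ 0 :=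
    mul_ne_zero (mul_ne_zero Complex.I_ne_zero hmC) hRC
  set c : ℂ := ((1 / R + β * ε : ℝ) : ℂ) with hcdef
  have hcC : c ≠ 0 := Complex.ofReal_ne_zero.mpr (by rw [mul_comm ε β] at hc; exact hc)
  -- ψ in terms of w
  have hψval : ∀ s ∈ S, ψ s = ((Complex.I * (m:ℂ) * (R:ℂ))⁻¹ * β) * w s + (-((Complex.I * (m:ℂ) * (R:ℂ))⁻¹ * c)) * besselOp m w s := by
    intro s hs
    have h : (Complex.I * (m:ℂ) * (R:ℂ)) * ψ s
        = (β:ℂ) * w s - c * besselOp m w s := by linear_combination heq1 s hs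
    have h2 : (Complex.I * (m:ℂ) * (R:ℂ))⁻¹ * ((Complex.I * (m:ℂ) * (R:ℂ)) * ψ s)
        = (Complex.I * (m:ℂ) * (R:ℂ))⁻¹ * ((β:ℂ) * w s - c * besselOp m w s) := by rw [h]
    rw [inv_mul_cancel_left₀ hd] at h2
    rw [h2]; ring
  -- Δψ
  have hΔψ : ∀ s ∈ S, besselOp m ψ s
      = ((Complex.I * (m:ℂ) * (R:ℂ))⁻¹ * β) * besselOp m w s + (-((Complex.I * (m:ℂ) * (R:ℂ))⁻¹ * c)) * besselOp m (besselOp m w) s := by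
    intro s hs
    have hev : ψ =ᶠ[nhds s] (fun t => ((Complex.I * (m:ℂ) * (R:ℂ))⁻¹ * β) * w t + (-((Complex.I * (m:ℂ) * (R:ℂ))⁻¹ * c)) * besselOp m w t) :=
      Filter.eventually_of_mem (isOpen_Ioo.mem_nhds hs) hψval
    rw [besselOp_congr hev]
    exact besselOp_linear _ _ hw hw1 s hs
  -- Δ²ψ
  have hΔ2ψ : besselOp m (besselOp m ψ) r
      = ((Complex.I * (m:ℂ) * (R:ℂ))⁻¹ * β) * besselOp m (besselOp m w) r
        + (-((Complex.I * (m:ℂ) * (R:ℂ))⁻¹ * c)) * besselOp m (besselOp m (besselOp m w)) r := by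
    have hev : besselOp m ψ =ᶠ[nhds r]
        (fun t => ((Complex.I * (m:ℂ) * (R:ℂ))⁻¹ * β) * besselOp m w t + (-((Complex.I * (m:ℂ) * (R:ℂ))⁻¹ * c)) * besselOp m (besselOp m w) t) :=
      Filter.eventually_of_mem (isOpen_Ioo.mem_nhds hr) hΔψ
    rw [besselOp_congr hev]
    exact besselOp_linear _ _ hw1 hw2 r hr
  -- abbreviations for the three iterated bessel ops at r
  set X := besselOp m w r with hX
  set Y := besselOp m (besselOp m w) r with hY
  set Z := besselOp m (besselOp m (besselOp m w)) r with hZ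
  -- key sixth-order relation
  have e2 := heq2 r hr
  rw [hΔ2ψ, hΔψ r hr] at e2
  have key : c ^ 2 * Z - 2 * β * c * Y + ((β:ℂ) ^ 2 - (ε:ℂ) * (m:ℂ) ^ 2 * (R:ℂ) ^ 2) * X = 0 := by
    have hI : (Complex.I) ^ 2 = -1 := Complex.I_sq
    have hd' : (Complex.I * (m:ℂ) * (R:ℂ)) * (Complex.I * (m:ℂ) * (R:ℂ))⁻¹ = 1 :=
      mul_inv_cancel₀ hd
    linear_combination (Complex.I * (m:ℂ) * (R:ℂ)) * e2
      + (-c^2*Z + 2*β*c*Y - (β:ℂ)^2*X) * hd'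
      + (-(ε:ℂ)*(m:ℂ)^2*(R:ℂ)^2*X) * hI
  -- lam, mu facts
  have hlR : lam * (1/R + β*ε) = Real.sqrt ε * m * R - β := by
    rw [hlam, mul_comm β ε, div_mul_cancel₀ _ hc]
  have hmR : mu * (1/R + β*ε) = -(Real.sqrt ε * m * R) - β := by
    rw [hmu, mul_comm β ε, div_mul_cancel₀ _ hc]
  have hlc : (lam:ℂ) * c = (Real.sqrt ε : ℂ) * (m:ℂ) * (R:ℂ) - (β:ℂ) := by
    rw [hcdef, ← Complex.ofReal_mul, hlR]; push_cast; ring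
  have hmc : (mu:ℂ) * c = -((Real.sqrt ε : ℂ) * (m:ℂ) * (R:ℂ)) - (β:ℂ) := by
    rw [hcdef, ← Complex.ofReal_mul, hmR]; push_cast; ring
  have hsq : ((Real.sqrt ε : ℝ) : ℂ) ^ 2 = (ε : ℂ) := by
    rw [← Complex.ofReal_pow, Real.sq_sqrt hε]
  -- rewrite the goal using linearity
  have hfun : (fun s => besselOp m (besselOp m w) s + (mu : ℂ) * besselOp m w s)
      = (fun s => (1:ℂ) * besselOp m (besselOp m w) s + (mu : ℂ) * besselOp m w s) := by
    funext s; ring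
  rw [hfun, besselOp_linear (1:ℂ) ((mu:ℂ)) hw2 hw1 r hr]
  have hc2 : c ^ 2 ≠ 0 := pow_ne_zero 2 hcC
  apply mul_left_cancel₀ hc2
  rw [mul_zero]
  linear_combination key + (c*Y + c*(mu:ℂ)*X) * hlc
    + (c*Y + ((Real.sqrt ε : ℂ) * (m:ℂ) * (R:ℂ) - (β:ℂ))*X) * hmc
    + (-(m:ℂ)^2*(R:ℂ)^2*X) * hsq
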